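/- Let P and Q be orthogonal projections in generic position on a complex Hilbert space H. Then the selfadjoint operator P+Q-1 is injective, and there exists a symmetry V on H (a selfadjoint unitary) such that V commutes with P+Q-1, V(P+Q-1) is a positive operator, VPV = Q, VQV = P, and V(P-Q) = -(P-Q)V. -/

import Mathlib

open ContinuousLinearMap
open scoped InnerProductSpace

set_option synthInstance.maxHeartbeats 1000000
set_option maxHeartbeats 2000000

lemma isClosed_centralizer' {A : Type*} [NormedRing A] (s : Set A) :
    IsClosed (Set.centralizer s) := by
  have : Set.centralizer s = ⋂ g ∈ s, {x | g * x = x * g} := by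
    ext x; simp [Set.mem_centralizer_iff]
  rw [this]
  refine isClosed_biInter fun g _ => isClosed_eq ?_ ?_
  · exact continuous_const.mul continuous_id
  · exact continuous_id.mul continuous_const

open StarAlgebra in
lemma commute_cfc_of_commute {A : Type*} [CStarAlgebra A] {a b : A}
    (h : Commute b a) (h' : Commute (star b) a) (f : ℂ → ℂ) : Commute b (cfc f a) := by
  refine cfc_cases (fun x => Commute b x) a f (Commute.zero_right b) fun hf ha => ?_
  have hcl : IsClosed ((StarSubalgebra.centralizer ℂ {b} : StarSubalgebra ℂ A) : Set A) := by
    rw [StarSubalgebra.coe_centralizer]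
    exact isClosed_centralizer' _
  have hmem : a ∈ StarSubalgebra.centralizer ℂ {b} := by
    rw [StarSubalgebra.mem_centralizer_iff]
    rintro g hg
    rw [Set.mem_singleton_iff] at hg
    subst hg
    exact ⟨h, h'⟩
  have hx : cfcHom ha ⟨_, hf.restrict⟩ ∈ elemental ℂ a := by
    rw [cfcHom_eq_of_isStarNormal]
    exact ((continuousFunctionalCalculus a) ⟨_, hf.restrict⟩).2
  have := elemental.le_of_mem hcl hmem hx
  rw [StarSubalgebra.mem_centralizer_iff] at this
  exact (this b rfl).1

variable {H : Type*} [NormedAddCommGroup H] [InnerProductSpace ℂ H] [CompleteSpace H]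

/-- An orthogonal projection: a selfadjoint idempotent bounded operator. -/
def IsOrthogonalProjection (P : H →L[ℂ] H) : Prop :=
  IsSelfAdjoint P ∧ P * P = P

/-- A symmetry: a selfadjoint unitary operator. -/
def IsSymmetry (V : H →L[ℂ] H) : Prop :=
  IsSelfAdjoint V ∧ V * V = 1

/-- Two orthogonal projections are in generic position if the four canonical
intersections of their ranges and kernels are trivial. -/
def GenericPosition (P Q : H →L[ℂ] H) : Prop :=
  LinearMap.range (P : H →ₗ[ℂ] H) ⊓ LinearMap.range (Q : H →ₗ[ℂ] H) = ⊥ ∧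
  LinearMap.range (P : H →ₗ[ℂ] H) ⊓ LinearMap.ker (Q : H →ₗ[ℂ] H) = ⊥ ∧
  LinearMap.ker (P : H →ₗ[ℂ] H) ⊓ LinearMap.range (Q : H →ₗ[ℂ] H) = ⊥ ∧
  LinearMap.ker (P : H →ₗ[ℂ] H) ⊓ LinearMap.ker (Q : H →ₗ[ℂ] H) = ⊥


theorem davis_symmetry_exists' (P Q : H →L[ℂ] H)
    (hP1 : IsSelfAdjoint P) (hP2 : P * P = P) (hQ1 : IsSelfAdjoint Q) (hQ2 : Q * Q = Q)
    (h1 : LinearMap.range (P : H →ₗ[ℂ] H) ⊓ LinearMap.ker (Q : H →ₗ[ℂ] H) = ⊥)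
    (h2 : LinearMap.ker (P : H →ₗ[ℂ] H) ⊓ LinearMap.range (Q : H →ₗ[ℂ] H) = ⊥) :
    Function.Injective ⇑(P + Q - 1) ∧
    ∃ V : H →L[ℂ] H, (IsSelfAdjoint V ∧ V * V = 1) ∧ Commute V (P + Q - 1) ∧
      (V * (P + Q - 1)).IsPositive ∧
      V * P * V = Q ∧ V * Q * V = P ∧
      V * (P - Q) = -((P - Q) * V) := by
  set A : H →L[ℂ] H := P + Q - 1 with hAdef
  have hA : IsSelfAdjoint A := (hP1.add hQ1).sub (IsSelfAdjoint.one _)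
  have hAsym : (A : H →ₗ[ℂ] H).IsSymmetric :=
    ContinuousLinearMap.isSelfAdjoint_iff_isSymmetric.mp hA
  -- injectivity of A
  have hAker : ∀ x, A x = 0 → x = 0 := by
    intro x hx
    have hx' : P x + Q x - x = 0 := by
      simpa [hAdef, sub_apply, add_apply, one_apply] using hx
    have hPP : P (P x) = P x := by
      have := DFunLike.congr_fun hP2 x
      simpa [mul_apply] using this
    have hQQ : Q (Q x) = Q x := by
      have := DFunLike.congr_fun hQ2 x
      simpa [mul_apply] using this
    have e1 : P (Q x) = 0 := by
      have := congrArg (⇑P) hx'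
      simp only [map_add, map_sub, map_zero, hPP] at this
      rwa [add_sub_cancel_left] at this
    have e2 : Q (P x) = 0 := by
      have := congrArg (⇑Q) hx'
      simp only [map_add, map_sub, map_zero, hQQ] at this
      rwa [add_comm, add_sub_cancel_left] at this
    have hQx : Q x = 0 := by
      have hmem : Q x ∈ LinearMap.ker (P : H →ₗ[ℂ] H) ⊓ LinearMap.range (Q : H →ₗ[ℂ] H) :=
        ⟨LinearMap.mem_ker.mpr e1, ⟨x, rfl⟩⟩
      rw [h2] at hmem
      exact (Submodule.mem_bot ℂ).mp hmem
    have hPx : P x = 0 := by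
      have hmem : P x ∈ LinearMap.range (P : H →ₗ[ℂ] H) ⊓ LinearMap.ker (Q : H →ₗ[ℂ] H) :=
        ⟨⟨x, rfl⟩, LinearMap.mem_ker.mpr e2⟩
      rw [h1] at hmem
      exact (Submodule.mem_bot ℂ).mp hmem
    rw [hPx, hQx, zero_add, zero_sub, neg_eq_zero] at hx'
    exact hx'
  have hAinj : Function.Injective ⇑A := by
    intro x y hxy
    have : A (x - y) = 0 := by rw [map_sub, hxy, sub_self]
    have := hAker _ this
    exact sub_eq_zero.mp this
  -- algebra
  have hAP : A * P = Q * A := by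
    rw [hAdef]
    simp only [add_mul, sub_mul, mul_add, mul_sub, one_mul, mul_one, hP2, hQ2]
    abel
  have hAQ : A * Q = P * A := by
    rw [hAdef]
    simp only [add_mul, sub_mul, mul_add, mul_sub, one_mul, mul_one, hP2, hQ2]
    abel
  -- the square root T of A * A
  have h0A : (0 : H →L[ℂ] H) ≤ A * A := by
    have := star_mul_self_nonneg A
    rwa [hA.star_eq] at this
  have hAAsa : IsSelfAdjoint (A * A) := by
    rw [IsSelfAdjoint, star_mul, hA.star_eq]
  set T : H →L[ℂ] H := CFC.sqrt (A * A) with hTdef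
  have hTT : T * T = A * A := CFC.sqrt_mul_sqrt_self _ h0A
  have hT0 : (0 : H →L[ℂ] H) ≤ T := CFC.sqrt_nonneg _
  have hTpos : T.IsPositive := (nonneg_iff_isPositive T).mp hT0
  have hTsa : IsSelfAdjoint T := hTpos.isSelfAdjoint
  have hTsym : (T : H →ₗ[ℂ] H).IsSymmetric :=
    ContinuousLinearMap.isSelfAdjoint_iff_isSymmetric.mp hTsa
  -- commutation with T
  have hcomm : ∀ b : H →L[ℂ] H, IsSelfAdjoint b → Commute b (A * A) → Commute b T := by
    intro b hb hcb
    have hTcfc : T = cfc (fun x : ℂ => ((NNReal.sqrt x.re.toNNReal : ℝ) : ℂ)) (A * A) := by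
      rw [hTdef, CFC.sqrt_eq_cfc, cfc_nnreal_eq_real _ _ h0A, cfc_real_eq_complex _ hAAsa]
    rw [hTcfc]
    exact commute_cfc_of_commute hcb (by rwa [hb.star_eq]) _
  have hAT : Commute A T :=
    hcomm A hA ((Commute.refl A).mul_right (Commute.refl A))
  have hPT : Commute P T := by
    refine hcomm P hP1 ?_
    show P * (A * A) = (A * A) * P
    calc P * (A * A) = (P * A) * A := by rw [mul_assoc]
      _ = (A * Q) * A := by rw [hAQ]
      _ = A * (Q * A) := by rw [mul_assoc]
      _ = A * (A * P) := by rw [hAP]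
      _ = (A * A) * P := by rw [mul_assoc]
  have hQT : Commute Q T := by
    refine hcomm Q hQ1 ?_
    show Q * (A * A) = (A * A) * Q
    calc Q * (A * A) = (Q * A) * A := by rw [mul_assoc]
      _ = (A * P) * A := by rw [hAP]
      _ = A * (P * A) := by rw [mul_assoc]
      _ = A * (A * Q) := by rw [hAQ]
      _ = (A * A) * Q := by rw [mul_assoc]
  -- norm identity
  have hnorm : ∀ x, ‖T x‖ = ‖A x‖ := by
    intro x
    have h1 : (⟪T x, T x⟫_ℂ) = ⟪A x, A x⟫_ℂ := by
      calc ⟪T x, T x⟫_ℂ = ⟪x, T (T x)⟫_ℂ := hTsym x (T x)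
        _ = ⟪x, (T * T) x⟫_ℂ := by rw [ContinuousLinearMap.mul_apply]
        _ = ⟪x, (A * A) x⟫_ℂ := by rw [hTT]
        _ = ⟪x, A (A x)⟫_ℂ := by rw [ContinuousLinearMap.mul_apply]
        _ = ⟪A x, A x⟫_ℂ := (hAsym x (A x)).symm
    rw [inner_self_eq_norm_sq_to_K, inner_self_eq_norm_sq_to_K] at h1
    have h2 : ‖T x‖ ^ 2 = ‖A x‖ ^ 2 := by exact_mod_cast h1
    rw [← Real.sqrt_sq (norm_nonneg (T x)), ← Real.sqrt_sq (norm_nonneg (A x)), h2]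
  have hTker : ∀ x, T x = 0 → x = 0 := by
    intro x hx
    have : ‖A x‖ = 0 := by rw [← hnorm, hx, norm_zero]
    exact hAker x (norm_eq_zero.mp this)
  -- well-definedness
  have wd : ∀ x x', T x = T x' → A x = A x' := by
    intro x x' h
    have : T (x - x') = 0 := by rw [map_sub, h, sub_self]
    have : ‖A (x - x')‖ = 0 := by rw [← hnorm, this, norm_zero]
    have := norm_eq_zero.mp this
    rw [map_sub] at this
    exact sub_eq_zero.mp this
  -- construct V
  set D : Submodule ℂ H := LinearMap.range (T : H →ₗ[ℂ] H) with hDdef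
  choose sec hsec using fun y : D => show ∃ x, T x = y from LinearMap.mem_range.mp y.2
  have hDdense : Dense (D : Set H) := by
    have horth : (LinearMap.range (T : H →ₗ[ℂ] H))ᗮ = ⊥ := by
      rw [Submodule.eq_bot_iff]
      intro u hu
      rw [Submodule.mem_orthogonal] at hu
      have hTu : T u = 0 := by
        have h0 : ⟪T (T u), u⟫_ℂ = 0 := hu _ ⟨T u, rfl⟩
        have h0' : ⟪T u, T u⟫_ℂ = 0 := (hTsym (T u) u).symm.trans h0
        exact inner_self_eq_zero.mp h0'
      exact hTker u hTu
    have htop : (LinearMap.range (T : H →ₗ[ℂ] H)).topologicalClosure = ⊤ :=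
      Submodule.topologicalClosure_eq_top_iff.mpr horth
    have hcl := congrArg (fun K : Submodule ℂ H => (K : Set H)) htop
    simp only [Submodule.topologicalClosure_coe, Submodule.top_coe] at hcl
    rw [dense_iff_closure_eq]
    exact hcl
  have hTdense : DenseRange ⇑T := by
    simpa [DenseRange, hDdef, LinearMap.coe_range] using hDdense
  let f₀ : D →ₗ[ℂ] H :=
    { toFun := fun y => A (sec y)
      map_add' := fun y z => by
        have h : T (sec (y + z)) = T (sec y + sec z) := by
          rw [hsec, map_add, hsec, hsec]; rfl
        show A (sec (y + z)) = A (sec y) + A (sec z)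
        rw [wd _ _ h, map_add]
      map_smul' := fun c y => by
        have h : T (sec (c • y)) = T (c • sec y) := by
          rw [hsec, map_smul, hsec]; rfl
        show A (sec (c • y)) = c • A (sec y)
        rw [wd _ _ h, map_smul] }
  have hbound : ∀ y : D, ‖f₀ y‖ ≤ 1 * ‖y‖ := by
    intro y
    have hy : f₀ y = A (sec y) := rfl
    rw [hy, one_mul, ← hnorm, hsec]
    rfl
  let f : D →L[ℂ] H := f₀.mkContinuous 1 hbound
  have he_ui : IsUniformInducing ⇑(D.subtypeL) :=
    isometry_subtype_coe.isUniformInducing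
  have he_dense : DenseRange ⇑(D.subtypeL) := by
    have : Set.range ⇑(D.subtypeL) = (D : Set H) := Subtype.range_coe
    rw [DenseRange, this]
    exact hDdense
  let V : H →L[ℂ] H := f.extend D.subtypeL
  have hVT : ∀ x, V (T x) = A x := by
    intro x
    have hmem : T x ∈ D := ⟨x, rfl⟩
    have hx1 : T x = D.subtypeL ⟨T x, hmem⟩ := rfl
    rw [hx1]
    show f.extend D.subtypeL (D.subtypeL ⟨T x, hmem⟩) = A x
    rw [ContinuousLinearMap.extend_eq (h_dense := he_dense) (h_e := he_ui)]
    show A (sec ⟨T x, hmem⟩) = A x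
    exact wd _ _ (by rw [hsec])
  have eqT : ∀ S S' : H →L[ℂ] H, (∀ x, S (T x) = S' (T x)) → S = S' := by
    intro S S' h
    have hfe : ⇑S ∘ ⇑T = ⇑S' ∘ ⇑T := funext h
    have := hTdense.equalizer S.continuous S'.continuous hfe
    ext x
    exact congrFun this x
  have hATx : ∀ x, A (T x) = T (A x) := by
    intro x
    have := DFunLike.congr_fun hAT.eq x
    simpa [mul_apply] using this
  have hPTx : ∀ x, P (T x) = T (P x) := by
    intro x
    have := DFunLike.congr_fun hPT.eq x
    simpa [mul_apply] using this
  have hQTx : ∀ x, Q (T x) = T (Q x) := by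
    intro x
    have := DFunLike.congr_fun hQT.eq x
    simpa [mul_apply] using this
  have hVA : V * A = T := by
    refine eqT _ _ fun x => ?_
    calc (V * A) (T x) = V (A (T x)) := by rw [ContinuousLinearMap.mul_apply]
      _ = V (T (A x)) := by rw [hATx]
      _ = A (A x) := hVT (A x)
      _ = (A * A) x := by rw [ContinuousLinearMap.mul_apply]
      _ = (T * T) x := by rw [hTT]
      _ = T (T x) := by rw [ContinuousLinearMap.mul_apply]
  have hAV : A * V = T := by
    refine eqT _ _ fun x => ?_
    calc (A * V) (T x) = A (V (T x)) := by rw [ContinuousLinearMap.mul_apply]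
      _ = A (A x) := by rw [hVT]
      _ = (A * A) x := by rw [ContinuousLinearMap.mul_apply]
      _ = (T * T) x := by rw [hTT]
      _ = T (T x) := by rw [ContinuousLinearMap.mul_apply]
  have hVAx : ∀ x, V (A x) = T x := by
    intro x
    have := DFunLike.congr_fun hVA x
    simpa [mul_apply] using this
  have hVV : V * V = 1 := by
    refine eqT _ _ fun x => ?_
    calc (V * V) (T x) = V (V (T x)) := by rw [ContinuousLinearMap.mul_apply]
      _ = V (A x) := by rw [hVT]
      _ = T x := hVAx x
      _ = (1 : H →L[ℂ] H) (T x) := by rw [ContinuousLinearMap.one_apply]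
  have hVP : V * P = Q * V := by
    refine eqT _ _ fun x => ?_
    calc (V * P) (T x) = V (P (T x)) := by rw [ContinuousLinearMap.mul_apply]
      _ = V (T (P x)) := by rw [hPTx]
      _ = A (P x) := hVT (P x)
      _ = (A * P) x := by rw [ContinuousLinearMap.mul_apply]
      _ = (Q * A) x := by rw [hAP]
      _ = Q (A x) := by rw [ContinuousLinearMap.mul_apply]
      _ = Q (V (T x)) := by rw [hVT]
      _ = (Q * V) (T x) := by rw [ContinuousLinearMap.mul_apply]
  have hVQ : V * Q = P * V := by
    refine eqT _ _ fun x => ?_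
    calc (V * Q) (T x) = V (Q (T x)) := by rw [ContinuousLinearMap.mul_apply]
      _ = V (T (Q x)) := by rw [hQTx]
      _ = A (Q x) := hVT (Q x)
      _ = (A * Q) x := by rw [ContinuousLinearMap.mul_apply]
      _ = (P * A) x := by rw [hAQ]
      _ = P (A x) := by rw [ContinuousLinearMap.mul_apply]
      _ = P (V (T x)) := by rw [hVT]
      _ = (P * V) (T x) := by rw [ContinuousLinearMap.mul_apply]
  have hVsa : IsSelfAdjoint V := by
    rw [ContinuousLinearMap.isSelfAdjoint_iff_isSymmetric]
    have step1 : ∀ x w, ⟪V (T x), w⟫_ℂ = ⟪T x, V w⟫_ℂ := by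
      intro x
      have hc1 : Continuous fun w : H => ⟪V (T x), w⟫_ℂ :=
        Continuous.inner continuous_const continuous_id
      have hc2 : Continuous fun w : H => ⟪T x, V w⟫_ℂ :=
        Continuous.inner continuous_const V.continuous
      have key : (fun w : H => ⟪V (T x), w⟫_ℂ) ∘ ⇑T = (fun w : H => ⟪T x, V w⟫_ℂ) ∘ ⇑T := by
        funext y
        show ⟪V (T x), T y⟫_ℂ = ⟪T x, V (T y)⟫_ℂ
        rw [hVT, hVT]
        calc ⟪A x, T y⟫_ℂ = ⟪x, A (T y)⟫_ℂ := hAsym x (T y)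
          _ = ⟪x, T (A y)⟫_ℂ := by rw [hATx]
          _ = ⟪T x, A y⟫_ℂ := (hTsym x (A y)).symm
      exact fun w => congrFun (hTdense.equalizer hc1 hc2 key) w
    intro z w
    show ⟪V z, w⟫_ℂ = ⟪z, V w⟫_ℂ
    have hc1 : Continuous fun z : H => ⟪V z, w⟫_ℂ :=
      Continuous.inner V.continuous continuous_const
    have hc2 : Continuous fun z : H => ⟪z, V w⟫_ℂ :=
      Continuous.inner continuous_id continuous_const
    have key : (fun z : H => ⟪V z, w⟫_ℂ) ∘ ⇑T = (fun z : H => ⟪z, V w⟫_ℂ) ∘ ⇑T :=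
      funext fun x => step1 x w
    exact congrFun (hTdense.equalizer hc1 hc2 key) z
  refine ⟨hAinj, V, ⟨hVsa, hVV⟩, ?_, ?_, ?_, ?_, ?_⟩
  · show V * A = A * V
    rw [hVA, hAV]
  · rw [hVA]
    exact hTpos
  · rw [hVP, mul_assoc, hVV, mul_one]
  · rw [hVQ, mul_assoc, hVV, mul_one]
  · rw [mul_sub, sub_mul, hVP, hVQ, neg_sub]

/-- For projections `P, Q` in generic position, `P + Q - 1` is injective and
there is a symmetry `V` commuting with `P + Q - 1`, with `V * (P + Q - 1)` positive,
which interchanges `P` and `Q` and anticommutes with `P - Q`. -/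
theorem davis_symmetry_exists (P Q : H →L[ℂ] H)
    (hP : IsOrthogonalProjection P) (hQ : IsOrthogonalProjection Q)
    (hgen : GenericPosition P Q) :
    Function.Injective ⇑(P + Q - 1) ∧
    ∃ V : H →L[ℂ] H, IsSymmetry V ∧ Commute V (P + Q - 1) ∧
      (V * (P + Q - 1)).IsPositive ∧
      V * P * V = Q ∧ V * Q * V = P ∧
      V * (P - Q) = -((P - Q) * V) := by
  obtain ⟨hP1, hP2⟩ := hP
  obtain ⟨hQ1, hQ2⟩ := hQ
  obtain ⟨-, h1, h2, -⟩ := hgen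
  obtain ⟨hinj, V, hsym, hrest⟩ := davis_symmetry_exists' P Q hP1 hP2 hQ1 hQ2 h1 h2
  exact ⟨hinj, V, hsym, hrest⟩
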